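/- Let (A, V, C, R1, R2, R3, E) be two-sided crossed product data over a field k. Define R = (R1⊗id_C)∘(id_V⊗R3): (V⊗C)⊗A → A⊗(V⊗C) and σ: (V⊗C)⊗(V⊗C) → A⊗(V⊗C), σ((v⊗c)⊗(v'⊗c')) = E_A(v, v'_{R2})⊗(E_V(v, v'_{R2})⊗E_C(v, v'_{R2})c_{R2}c'). Then the compatibility condition (brz5) holds: (μ_A⊗id_{V⊗C})∘(id_A⊗σ)∘(R⊗id_{V⊗C})∘(id_{V⊗C}⊗R) = (μ_A⊗id_{V⊗C})∘(id_A⊗R)∘(σ⊗id_A). -/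

import Mathlib

open TensorProduct LinearMap

set_option maxHeartbeats 1000000
set_option synthInstance.maxHeartbeats 400000
set_option maxRecDepth 100000

noncomputable section

namespace TwoSidedCP

variable (k : Type*) [Field k]

/-- The associator as a linear map. -/
abbrev α (X Y Z : Type*) [AddCommGroup X] [Module k X] [AddCommGroup Y] [Module k Y]
    [AddCommGroup Z] [Module k Z] :
    (X ⊗[k] Y) ⊗[k] Z →ₗ[k] X ⊗[k] (Y ⊗[k] Z) :=
  (TensorProduct.assoc k X Y Z).toLinearMap

/-- The inverse associator as a linear map. -/
abbrev α' (X Y Z : Type*) [AddCommGroup X] [Module k X] [AddCommGroup Y] [Module k Y]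
    [AddCommGroup Z] [Module k Z] :
    X ⊗[k] (Y ⊗[k] Z) →ₗ[k] (X ⊗[k] Y) ⊗[k] Z :=
  (TensorProduct.assoc k X Y Z).symm.toLinearMap

/-- Multiplication `A ⊗ (A ⊗ V) → A ⊗ V` of the two `A`-factors. -/
def mulAV (A : Type*) [Ring A] [Algebra k A] (V : Type*) [AddCommGroup V] [Module k V] :
    A ⊗[k] (A ⊗[k] V) →ₗ[k] A ⊗[k] V :=
  rTensor V (mul' k A) ∘ₗ α' k A A V

/-- Multiplication `(X ⊗ C) ⊗ C → X ⊗ C` of the two `C`-factors. -/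
def mulXC (X : Type*) [AddCommGroup X] [Module k X] (C : Type*) [Ring C] [Algebra k C] :
    (X ⊗[k] C) ⊗[k] C →ₗ[k] X ⊗[k] C :=
  lTensor X (mul' k C) ∘ₗ α k X C C

section TwistingMaps
variable (A B : Type*) [Ring A] [Algebra k A] [Ring B] [Algebra k B]

/-- `R : B ⊗ A → A ⊗ B` is a twisting map between the algebras `A` and `B`:
  in Sweedler notation, `R(b ⊗ 1) = 1 ⊗ b`, `R(1 ⊗ a) = a ⊗ 1`,
  `(aa')_R ⊗ b_R = a_R a'_r ⊗ b_{R_r}` and `a_R ⊗ (bb')_R = a_{R_r} ⊗ b_r b'_R`. -/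
structure IsTwistingMap (R : B ⊗[k] A →ₗ[k] A ⊗[k] B) : Prop where
  unit_left : ∀ a : A, R ((1 : B) ⊗ₜ[k] a) = a ⊗ₜ[k] (1 : B)
  unit_right : ∀ b : B, R (b ⊗ₜ[k] (1 : A)) = (1 : A) ⊗ₜ[k] b
  mul_left : R ∘ₗ lTensor B (mul' k A) ∘ₗ α k B A A
      = rTensor B (mul' k A) ∘ₗ α' k A A B ∘ₗ lTensor A R ∘ₗ α k A B A ∘ₗ rTensor A R
  mul_right : R ∘ₗ rTensor A (mul' k B)
      = lTensor A (mul' k B) ∘ₗ α k A B B ∘ₗ rTensor B R ∘ₗ α' k B A B ∘ₗ lTensor B R ∘ₗ α k B B A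

/-- The multiplication `(a ⊗ b)(a' ⊗ b') = a a'_R ⊗ b_R b'` of the twisted tensor
  product `A ⊗_R B`. -/
def twistMul (R : B ⊗[k] A →ₗ[k] A ⊗[k] B) :
    (A ⊗[k] B) ⊗[k] (A ⊗[k] B) →ₗ[k] A ⊗[k] B :=
  TensorProduct.map (mul' k A) (mul' k B) ∘ₗ α' k A A (B ⊗[k] B) ∘ₗ lTensor A (α k A B B)
    ∘ₗ lTensor A (rTensor B R) ∘ₗ lTensor A (α' k B A B) ∘ₗ α k A B (A ⊗[k] B)

end TwistingMaps

section Brzezinski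
variable (A V : Type*) [Ring A] [Algebra k A] [AddCommGroup V] [Module k V]

/-- The Brzeziński crossed product conditions (brz1)-(brz5) for the data `(A, V, R, σ)`. -/
structure IsBrzData (e : V) (R : V ⊗[k] A →ₗ[k] A ⊗[k] V)
    (σ : V ⊗[k] V →ₗ[k] A ⊗[k] V) : Prop where
  brz1a : ∀ a : A, R (e ⊗ₜ[k] a) = a ⊗ₜ[k] e
  brz1b : ∀ v : V, R (v ⊗ₜ[k] (1 : A)) = (1 : A) ⊗ₜ[k] v
  brz2a : ∀ v : V, σ (e ⊗ₜ[k] v) = (1 : A) ⊗ₜ[k] v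
  brz2b : ∀ v : V, σ (v ⊗ₜ[k] e) = (1 : A) ⊗ₜ[k] v
  brz3 : R ∘ₗ lTensor V (mul' k A) ∘ₗ α k V A A
      = rTensor V (mul' k A) ∘ₗ α' k A A V ∘ₗ lTensor A R ∘ₗ α k A V A ∘ₗ rTensor A R
  brz4 : rTensor V (mul' k A) ∘ₗ α' k A A V ∘ₗ lTensor A σ ∘ₗ α k A V V ∘ₗ rTensor V R
        ∘ₗ α' k V A V ∘ₗ lTensor V σ ∘ₗ α k V V V
      = rTensor V (mul' k A) ∘ₗ α' k A A V ∘ₗ lTensor A σ ∘ₗ α k A V V ∘ₗ rTensor V σ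
  brz5 : rTensor V (mul' k A) ∘ₗ α' k A A V ∘ₗ lTensor A σ ∘ₗ α k A V V ∘ₗ rTensor V R
        ∘ₗ α' k V A V ∘ₗ lTensor V R ∘ₗ α k V V A
      = rTensor V (mul' k A) ∘ₗ α' k A A V ∘ₗ lTensor A R ∘ₗ α k A V A ∘ₗ rTensor A σ

/-- The multiplication `μ_{A⊗V} = (μ₂ ⊗ id_V)∘(id_A ⊗ id_A ⊗ σ)∘(id_A ⊗ R ⊗ id_V)`
  of the Brzeziński crossed product `A ⊗_{R,σ} V`. -/
def brzMul (R : V ⊗[k] A →ₗ[k] A ⊗[k] V) (σ : V ⊗[k] V →ₗ[k] A ⊗[k] V) :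
    (A ⊗[k] V) ⊗[k] (A ⊗[k] V) →ₗ[k] A ⊗[k] V :=
  rTensor V (mul' k A) ∘ₗ α' k A A V ∘ₗ rTensor (A ⊗[k] V) (mul' k A)
    ∘ₗ α' k A A (A ⊗[k] V) ∘ₗ lTensor A (lTensor A σ) ∘ₗ lTensor A (α k A V V)
    ∘ₗ lTensor A (rTensor V R) ∘ₗ lTensor A (α' k V A V) ∘ₗ α k A V (A ⊗[k] V)

end Brzezinski

section Mirror
variable (W B : Type*) [AddCommGroup W] [Module k W] [AddCommGroup B] [Module k B]

/-- The mirror crossed product conditions (mir0)-(mir4) for the data `(W, B, P, ν)`,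
  where the multiplication of `B` is given by `mB` with unit `uB`. -/
structure IsMirrorData (mB : B ⊗[k] B →ₗ[k] B) (uB : B) (e : W)
    (P : B ⊗[k] W →ₗ[k] W ⊗[k] B) (ν : W ⊗[k] W →ₗ[k] W ⊗[k] B) : Prop where
  mir0a : ∀ b : B, P (b ⊗ₜ[k] e) = e ⊗ₜ[k] b
  mir0b : ∀ w : W, P (uB ⊗ₜ[k] w) = w ⊗ₜ[k] uB
  mir1a : ∀ w : W, ν (w ⊗ₜ[k] e) = w ⊗ₜ[k] uB
  mir1b : ∀ w : W, ν (e ⊗ₜ[k] w) = w ⊗ₜ[k] uB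
  mir2 : P ∘ₗ rTensor W mB
      = lTensor W mB ∘ₗ α k W B B ∘ₗ rTensor B P ∘ₗ α' k B W B ∘ₗ lTensor B P ∘ₗ α k B B W
  mir3 : lTensor W mB ∘ₗ α k W B B ∘ₗ rTensor B ν ∘ₗ α' k W W B ∘ₗ lTensor W P
        ∘ₗ α k W B W ∘ₗ rTensor W ν
      = lTensor W mB ∘ₗ α k W B B ∘ₗ rTensor B ν ∘ₗ α' k W W B ∘ₗ lTensor W ν ∘ₗ α k W W W
  mir4 : lTensor W mB ∘ₗ α k W B B ∘ₗ rTensor B ν ∘ₗ α' k W W B ∘ₗ lTensor W P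
        ∘ₗ α k W B W ∘ₗ rTensor W P
      = lTensor W mB ∘ₗ α k W B B ∘ₗ rTensor B P ∘ₗ α' k B W B ∘ₗ lTensor B ν ∘ₗ α k B W W

/-- The multiplication `μ_{W⊗B} = (id_W ⊗ μ₂)∘(ν ⊗ id_B ⊗ id_B)∘(id_W ⊗ P ⊗ id_B)`
  of the mirror crossed product `W ⊗̄_{P,ν} B`. -/
def mirMul (mB : B ⊗[k] B →ₗ[k] B) (P : B ⊗[k] W →ₗ[k] W ⊗[k] B)
    (ν : W ⊗[k] W →ₗ[k] W ⊗[k] B) :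
    (W ⊗[k] B) ⊗[k] (W ⊗[k] B) →ₗ[k] W ⊗[k] B :=
  lTensor W mB ∘ₗ lTensor W (lTensor B mB) ∘ₗ α k W B (B ⊗[k] B)
    ∘ₗ rTensor (B ⊗[k] B) ν ∘ₗ α' k W W (B ⊗[k] B) ∘ₗ lTensor W (α k W B B)
    ∘ₗ lTensor W (rTensor B P) ∘ₗ lTensor W (α' k B W B) ∘ₗ α k W B (W ⊗[k] B)

end Mirror

section TwoSided
variable (A V C : Type*) [Ring A] [Algebra k A] [AddCommGroup V] [Module k V]
  [Ring C] [Algebra k C]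

/-- auxiliary map: multiply the leftover `A`-factor and `C`-factor into `A ⊗ V ⊗ C`. -/
def tsTail : (A ⊗[k] ((A ⊗[k] V) ⊗[k] C)) ⊗[k] C →ₗ[k] (A ⊗[k] V) ⊗[k] C :=
  mulXC k (A ⊗[k] V) C ∘ₗ rTensor C (rTensor C (mulAV k A V) ∘ₗ α' k A (A ⊗[k] V) C)

/-- Two-sided crossed product data `(A, V, C, R1, R2, R3, E)`:
  conditions (i)-(v) of Theorem 2.1 of the paper. -/
structure IsTwoSidedData (e : V) (R1 : V ⊗[k] A →ₗ[k] A ⊗[k] V)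
    (R2 : C ⊗[k] V →ₗ[k] V ⊗[k] C) (R3 : C ⊗[k] A →ₗ[k] A ⊗[k] C)
    (E : V ⊗[k] V →ₗ[k] (A ⊗[k] V) ⊗[k] C) : Prop where
  twist : IsTwistingMap k A C R3
  r1a : ∀ a : A, R1 (e ⊗ₜ[k] a) = a ⊗ₜ[k] e
  r1b : ∀ v : V, R1 (v ⊗ₜ[k] (1 : A)) = (1 : A) ⊗ₜ[k] v
  r2a : ∀ c : C, R2 (c ⊗ₜ[k] e) = e ⊗ₜ[k] c
  r2b : ∀ v : V, R2 ((1 : C) ⊗ₜ[k] v) = v ⊗ₜ[k] (1 : C)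
  ea : ∀ v : V, E (e ⊗ₜ[k] v) = ((1 : A) ⊗ₜ[k] v) ⊗ₜ[k] (1 : C)
  eb : ∀ v : V, E (v ⊗ₜ[k] e) = ((1 : A) ⊗ₜ[k] v) ⊗ₜ[k] (1 : C)
  eq1 : R1 ∘ₗ lTensor V (mul' k A) ∘ₗ α k V A A
      = rTensor V (mul' k A) ∘ₗ α' k A A V ∘ₗ lTensor A R1 ∘ₗ α k A V A ∘ₗ rTensor A R1
  eq2 : R2 ∘ₗ rTensor V (mul' k C)
      = lTensor V (mul' k C) ∘ₗ α k V C C ∘ₗ rTensor C R2 ∘ₗ α' k C V C ∘ₗ lTensor C R2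
        ∘ₗ α k C C V
  eq3 : lTensor A R2 ∘ₗ α k A C V ∘ₗ rTensor V R3 ∘ₗ α' k C A V ∘ₗ lTensor C R1
      = α k A V C ∘ₗ rTensor C R1 ∘ₗ α' k V A C ∘ₗ lTensor V R3 ∘ₗ α k V C A
        ∘ₗ rTensor A R2 ∘ₗ α' k C V A
  eq4 : rTensor C (mulAV k A V) ∘ₗ α' k A (A ⊗[k] V) C ∘ₗ lTensor A E ∘ₗ α k A V V
        ∘ₗ rTensor V R1 ∘ₗ α' k V A V ∘ₗ lTensor V R1 ∘ₗ α k V V A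
      = rTensor C (mulAV k A V) ∘ₗ rTensor C (lTensor A R1) ∘ₗ rTensor C (α k A V A)
        ∘ₗ α' k (A ⊗[k] V) A C ∘ₗ lTensor (A ⊗[k] V) R3 ∘ₗ α k (A ⊗[k] V) C A ∘ₗ rTensor A E
  eq5 : mulXC k (A ⊗[k] V) C ∘ₗ rTensor C E ∘ₗ α' k V V C ∘ₗ lTensor V R2
        ∘ₗ α k V C V ∘ₗ rTensor V R2
      = mulXC k (A ⊗[k] V) C ∘ₗ rTensor C (α' k A V C) ∘ₗ rTensor C (lTensor A R2)
        ∘ₗ rTensor C (α k A C V) ∘ₗ rTensor C (rTensor V R3) ∘ₗ rTensor C (α' k C A V)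
        ∘ₗ α' k C (A ⊗[k] V) C ∘ₗ lTensor C E ∘ₗ α k C V V
  eq6 : tsTail k A V C ∘ₗ rTensor C (lTensor A E) ∘ₗ rTensor C (α k A V V)
        ∘ₗ rTensor C (rTensor V R1) ∘ₗ rTensor C (α' k V A V)
        ∘ₗ α' k V (A ⊗[k] V) C ∘ₗ lTensor V E ∘ₗ α k V V V
      = tsTail k A V C ∘ₗ rTensor C (lTensor A E) ∘ₗ rTensor C (α k A V V)
        ∘ₗ α' k (A ⊗[k] V) V C ∘ₗ lTensor (A ⊗[k] V) R2 ∘ₗ α k (A ⊗[k] V) C V ∘ₗ rTensor V E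

/-- The map `P = (id_A ⊗ R2)∘(R3 ⊗ id_V) : C ⊗ (A ⊗ V) → (A ⊗ V) ⊗ C`. -/
def tsP (R2 : C ⊗[k] V →ₗ[k] V ⊗[k] C) (R3 : C ⊗[k] A →ₗ[k] A ⊗[k] C) :
    C ⊗[k] (A ⊗[k] V) →ₗ[k] (A ⊗[k] V) ⊗[k] C :=
  α' k A V C ∘ₗ lTensor A R2 ∘ₗ α k A C V ∘ₗ rTensor V R3 ∘ₗ α' k C A V

/-- The map `ν = (μ_A ⊗ id_V ⊗ id_C)∘(μ_A ⊗ E)∘(id_A ⊗ R1 ⊗ id_V)`,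
  `ν((a ⊗ v) ⊗ (a' ⊗ v')) = (a a'_{R1} E_A(v_{R1}, v') ⊗ E_V(v_{R1}, v')) ⊗ E_C(v_{R1}, v')`. -/
def tsNu (R1 : V ⊗[k] A →ₗ[k] A ⊗[k] V) (E : V ⊗[k] V →ₗ[k] (A ⊗[k] V) ⊗[k] C) :
    (A ⊗[k] V) ⊗[k] (A ⊗[k] V) →ₗ[k] (A ⊗[k] V) ⊗[k] C :=
  rTensor C (mulAV k A V) ∘ₗ α' k A (A ⊗[k] V) C ∘ₗ lTensor A (rTensor C (mulAV k A V))
    ∘ₗ lTensor A (α' k A (A ⊗[k] V) C) ∘ₗ lTensor A (lTensor A E) ∘ₗ lTensor A (α k A V V)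
    ∘ₗ lTensor A (rTensor V R1) ∘ₗ lTensor A (α' k V A V) ∘ₗ α k A V (A ⊗[k] V)

/-- The map `R = (R1 ⊗ id_C)∘(id_V ⊗ R3) : (V ⊗ C) ⊗ A → A ⊗ (V ⊗ C)`. -/
def tsR (R1 : V ⊗[k] A →ₗ[k] A ⊗[k] V) (R3 : C ⊗[k] A →ₗ[k] A ⊗[k] C) :
    (V ⊗[k] C) ⊗[k] A →ₗ[k] A ⊗[k] (V ⊗[k] C) :=
  α k A V C ∘ₗ rTensor C R1 ∘ₗ α' k V A C ∘ₗ lTensor V R3 ∘ₗ α k V C A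

/-- The map `σ = (id_A ⊗ id_V ⊗ μ_C)∘(E ⊗ μ_C)∘(id_V ⊗ R2 ⊗ id_C)`,
  `σ((v ⊗ c) ⊗ (v' ⊗ c')) = E_A(v, v'_{R2}) ⊗ (E_V(v, v'_{R2}) ⊗ E_C(v, v'_{R2}) c_{R2} c')`. -/
def tsSigma (R2 : C ⊗[k] V →ₗ[k] V ⊗[k] C) (E : V ⊗[k] V →ₗ[k] (A ⊗[k] V) ⊗[k] C) :
    (V ⊗[k] C) ⊗[k] (V ⊗[k] C) →ₗ[k] A ⊗[k] (V ⊗[k] C) :=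
  α k A V C ∘ₗ mulXC k (A ⊗[k] V) C ∘ₗ rTensor C E ∘ₗ α' k V V C
    ∘ₗ lTensor V (lTensor V (mul' k C)) ∘ₗ lTensor V (α k V C C)
    ∘ₗ lTensor V (rTensor C R2) ∘ₗ lTensor V (α' k C V C) ∘ₗ α k V C (V ⊗[k] C)

/-- The multiplication of the two-sided crossed product `A ⋊ V ⋉ C`:
  `(a ⊗ v ⊗ c)(a' ⊗ v' ⊗ c') = a (a'_{R3})_{R1} E_A(v_{R1}, v'_{R2}) ⊗ E_V(v_{R1}, v'_{R2})
    ⊗ E_C(v_{R1}, v'_{R2}) (c_{R3})_{R2} c'`. -/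
def tsMul (R1 : V ⊗[k] A →ₗ[k] A ⊗[k] V) (R2 : C ⊗[k] V →ₗ[k] V ⊗[k] C)
    (R3 : C ⊗[k] A →ₗ[k] A ⊗[k] C) (E : V ⊗[k] V →ₗ[k] (A ⊗[k] V) ⊗[k] C) :
    ((A ⊗[k] V) ⊗[k] C) ⊗[k] ((A ⊗[k] V) ⊗[k] C) →ₗ[k] (A ⊗[k] V) ⊗[k] C :=
  lTensor (A ⊗[k] V) (mul' k C) ∘ₗ α k (A ⊗[k] V) C C
    ∘ₗ rTensor C (tsNu k A V C R1 E) ∘ₗ α' k (A ⊗[k] V) (A ⊗[k] V) C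
    ∘ₗ lTensor (A ⊗[k] V) (lTensor (A ⊗[k] V) (mul' k C))
    ∘ₗ lTensor (A ⊗[k] V) (α k (A ⊗[k] V) C C)
    ∘ₗ lTensor (A ⊗[k] V) (rTensor C (tsP k A V C R2 R3))
    ∘ₗ lTensor (A ⊗[k] V) (α' k C (A ⊗[k] V) C)
    ∘ₗ α k (A ⊗[k] V) C ((A ⊗[k] V) ⊗[k] C)

/-- The canonical linear isomorphism `A ⊗ V ⊗ C ≅ V ⊗ (A ⊗ C)`. -/
def phiVAC : ((A ⊗[k] V) ⊗[k] C) ≃ₗ[k] V ⊗[k] (A ⊗[k] C) :=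
  (TensorProduct.congr (TensorProduct.comm k A V) (LinearEquiv.refl k C)).trans
    (TensorProduct.assoc k V A C)

end TwoSided

section Iterated
variable (A B C : Type*) [Ring A] [Algebra k A] [Ring B] [Algebra k B] [Ring C] [Algebra k C]

/-- The multiplication of the iterated twisted tensor product:
  `(a ⊗ b ⊗ c)(a' ⊗ b' ⊗ c') = a (a'_{R3})_{R1} ⊗ b_{R1} b'_{R2} ⊗ (c_{R3})_{R2} c'`. -/
def iterMul (R1 : B ⊗[k] A →ₗ[k] A ⊗[k] B) (R2 : C ⊗[k] B →ₗ[k] B ⊗[k] C)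
    (R3 : C ⊗[k] A →ₗ[k] A ⊗[k] C) :
    ((A ⊗[k] B) ⊗[k] C) ⊗[k] ((A ⊗[k] B) ⊗[k] C) →ₗ[k] (A ⊗[k] B) ⊗[k] C :=
  rTensor C (twistMul k A B R1) ∘ₗ α' k (A ⊗[k] B) (A ⊗[k] B) C
    ∘ₗ lTensor (A ⊗[k] B) (lTensor (A ⊗[k] B) (mul' k C))
    ∘ₗ lTensor (A ⊗[k] B) (α k (A ⊗[k] B) C C)
    ∘ₗ lTensor (A ⊗[k] B) (rTensor C (tsP k A B C R2 R3))
    ∘ₗ lTensor (A ⊗[k] B) (α' k C (A ⊗[k] B) C)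
    ∘ₗ α k (A ⊗[k] B) C ((A ⊗[k] B) ⊗[k] C)

end Iterated


section KeyLemma
open CategoryTheory MonoidalCategory
local infixr:70 " ⊙ " => MonoidalCategoryStruct.tensorObj

theorem key {M : Type*} [Category M] [MonoidalCategory M] (A V C : M)
    (m : A ⊙ A ⟶ A) (n : C ⊙ C ⟶ C) (r1 : V ⊙ A ⟶ A ⊙ V) (r2 : C ⊙ V ⟶ V ⊙ C)
    (r3 : C ⊙ A ⟶ A ⊙ C) (ee : V ⊙ V ⟶ (A ⊙ V) ⊙ C)
    (hr3 : (n ▷ A) ≫ r3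
      = (α_ C C A).hom ≫ (C ◁ r3) ≫ (α_ C A C).inv ≫ (r3 ▷ C) ≫ (α_ A C C).hom ≫ (A ◁ n))
    (heq3 : (C ◁ r1) ≫ (α_ C A V).inv ≫ (r3 ▷ V) ≫ (α_ A C V).hom ≫ (A ◁ r2)
      = (α_ C V A).inv ≫ (r2 ▷ A) ≫ (α_ V C A).hom ≫ (V ◁ r3) ≫ (α_ V A C).inv
          ≫ (r1 ▷ C) ≫ (α_ A V C).hom)
    (heq4 : (α_ V V A).hom ≫ (V ◁ r1) ≫ (α_ V A V).inv ≫ (r1 ▷ V) ≫ (α_ A V V).hom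
          ≫ (A ◁ ee) ≫ (α_ A (A ⊙ V) C).inv ≫ (((α_ A A V).inv ≫ (m ▷ V)) ▷ C)
      = (ee ▷ A) ≫ (α_ (A ⊙ V) C A).hom ≫ ((A ⊙ V) ◁ r3) ≫ (α_ (A ⊙ V) A C).inv
          ≫ ((α_ A V A).hom ▷ C) ≫ ((A ◁ r1) ▷ C) ≫ (((α_ A A V).inv ≫ (m ▷ V)) ▷ C))
    (R : (V ⊙ C) ⊙ A ⟶ A ⊙ (V ⊙ C))
    (hR : R = (α_ V C A).hom ≫ (V ◁ r3) ≫ (α_ V A C).inv ≫ (r1 ▷ C) ≫ (α_ A V C).hom)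
    (σ : (V ⊙ C) ⊙ (V ⊙ C) ⟶ A ⊙ (V ⊙ C))
    (hσ : σ = (α_ V C (V ⊙ C)).hom ≫ (V ◁ (α_ C V C).inv) ≫ (V ◁ (r2 ▷ C))
        ≫ (V ◁ (α_ V C C).hom) ≫ (V ◁ (V ◁ n))
        ≫ (α_ V V C).inv ≫ (ee ▷ C) ≫ ((α_ (A ⊙ V) C C).hom ≫ ((A ⊙ V) ◁ n))
        ≫ (α_ A V C).hom) :
    (σ ▷ A) ≫ (α_ A (V ⊙ C) A).hom ≫ (A ◁ R) ≫ (α_ A A (V ⊙ C)).inv ≫ (m ▷ (V ⊙ C))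
    = (α_ (V ⊙ C) (V ⊙ C) A).hom ≫ ((V ⊙ C) ◁ R) ≫ (α_ (V ⊙ C) A (V ⊙ C)).inv
        ≫ (R ▷ (V ⊙ C)) ≫ (α_ A (V ⊙ C) (V ⊙ C)).hom ≫ (A ◁ σ)
        ≫ (α_ A A (V ⊙ C)).inv ≫ (m ▷ (V ⊙ C)) := by
  subst hR hσ
  calc
    _ = 𝟙 (((V ⊙ C) ⊙ (V ⊙ C)) ⊙ A) ⊗≫ (V ◁ (r2 ▷ (C ⊙ A))) ⊗≫ (V ◁ (V ◁ (n ▷ A)))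
        ⊗≫ (ee ▷ (C ⊙ A)) ⊗≫ (A ◁ (V ◁ ((n ▷ A) ≫ r3))) ⊗≫ (A ◁ (r1 ▷ C))
        ⊗≫ (m ▷ (V ⊙ C)) := by
      monoidal
    _ = 𝟙 (((V ⊙ C) ⊙ (V ⊙ C)) ⊙ A) ⊗≫ (V ◁ (r2 ▷ (C ⊙ A))) ⊗≫ (V ◁ (V ◁ (n ▷ A)))
        ⊗≫ (ee ▷ (C ⊙ A))
        ⊗≫ (A ◁ (V ◁ ((α_ C C A).hom ≫ (C ◁ r3) ≫ (α_ C A C).inv ≫ (r3 ▷ C)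
              ≫ (α_ A C C).hom ≫ (A ◁ n))))
        ⊗≫ (A ◁ (r1 ▷ C)) ⊗≫ (m ▷ (V ⊙ C)) := by
      rw [hr3]
    _ = 𝟙 (((V ⊙ C) ⊙ (V ⊙ C)) ⊙ A) ⊗≫ (V ◁ (r2 ▷ (C ⊙ A))) ⊗≫ (V ◁ (V ◁ (n ▷ A)))
        ⊗≫ ((ee ▷ (C ⊙ A)) ≫ (((A ⊙ V) ⊙ C) ◁ r3))
        ⊗≫ (A ◁ (V ◁ ((α_ C A C).inv ≫ (r3 ▷ C) ≫ (α_ A C C).hom ≫ (A ◁ n))))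
        ⊗≫ (A ◁ (r1 ▷ C)) ⊗≫ (m ▷ (V ⊙ C)) := by
      monoidal
    _ = 𝟙 (((V ⊙ C) ⊙ (V ⊙ C)) ⊙ A) ⊗≫ (V ◁ (r2 ▷ (C ⊙ A))) ⊗≫ (V ◁ (V ◁ (n ▷ A)))
        ⊗≫ (((V ⊙ V) ◁ r3) ≫ (ee ▷ (A ⊙ C)))
        ⊗≫ (A ◁ (V ◁ ((α_ C A C).inv ≫ (r3 ▷ C) ≫ (α_ A C C).hom ≫ (A ◁ n))))
        ⊗≫ (A ◁ (r1 ▷ C)) ⊗≫ (m ▷ (V ⊙ C)) := by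
      rw [← whisker_exchange ee r3]
    _ = 𝟙 (((V ⊙ C) ⊙ (V ⊙ C)) ⊙ A) ⊗≫ (V ◁ (r2 ▷ (C ⊙ A)))
        ⊗≫ (V ◁ (V ◁ ((n ▷ A) ≫ r3))) ⊗≫ (ee ▷ (A ⊙ C))
        ⊗≫ (A ◁ (V ◁ ((α_ C A C).inv ≫ (r3 ▷ C) ≫ (α_ A C C).hom ≫ (A ◁ n))))
        ⊗≫ (A ◁ (r1 ▷ C)) ⊗≫ (m ▷ (V ⊙ C)) := by
      monoidal
    _ = 𝟙 (((V ⊙ C) ⊙ (V ⊙ C)) ⊙ A) ⊗≫ (V ◁ (r2 ▷ (C ⊙ A)))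
        ⊗≫ (V ◁ (V ◁ ((α_ C C A).hom ≫ (C ◁ r3) ≫ (α_ C A C).inv ≫ (r3 ▷ C)
              ≫ (α_ A C C).hom ≫ (A ◁ n))))
        ⊗≫ (ee ▷ (A ⊙ C))
        ⊗≫ (A ◁ (V ◁ ((α_ C A C).inv ≫ (r3 ▷ C) ≫ (α_ A C C).hom ≫ (A ◁ n))))
        ⊗≫ (A ◁ (r1 ▷ C)) ⊗≫ (m ▷ (V ⊙ C)) := by
      rw [hr3]
    _ = 𝟙 (((V ⊙ C) ⊙ (V ⊙ C)) ⊙ A) ⊗≫ (V ◁ (r2 ▷ (C ⊙ A))) ⊗≫ (V ◁ (V ◁ (C ◁ r3)))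
        ⊗≫ (V ◁ (V ◁ (r3 ▷ C)))
        ⊗≫ ((((V ⊙ V) ◁ (A ◁ n)) ≫ (ee ▷ (A ⊙ C))))
        ⊗≫ (A ◁ (V ◁ ((α_ C A C).inv ≫ (r3 ▷ C) ≫ (α_ A C C).hom ≫ (A ◁ n))))
        ⊗≫ (A ◁ (r1 ▷ C)) ⊗≫ (m ▷ (V ⊙ C)) := by
      monoidal
    _ = 𝟙 (((V ⊙ C) ⊙ (V ⊙ C)) ⊙ A) ⊗≫ (V ◁ (r2 ▷ (C ⊙ A))) ⊗≫ (V ◁ (V ◁ (C ◁ r3)))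
        ⊗≫ (V ◁ (V ◁ (r3 ▷ C)))
        ⊗≫ (((ee ▷ (A ⊙ (C ⊙ C))) ≫ (((A ⊙ V) ⊙ C) ◁ (A ◁ n))))
        ⊗≫ (A ◁ (V ◁ ((α_ C A C).inv ≫ (r3 ▷ C) ≫ (α_ A C C).hom ≫ (A ◁ n))))
        ⊗≫ (A ◁ (r1 ▷ C)) ⊗≫ (m ▷ (V ⊙ C)) := by
      rw [whisker_exchange ee (A ◁ n)]
    _ = 𝟙 (((V ⊙ C) ⊙ (V ⊙ C)) ⊙ A) ⊗≫ (V ◁ (r2 ▷ (C ⊙ A))) ⊗≫ (V ◁ (V ◁ (C ◁ r3)))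
        ⊗≫ (V ◁ (V ◁ (r3 ▷ C))) ⊗≫ (ee ▷ (A ⊙ (C ⊙ C)))
        ⊗≫ ((((A ⊙ V) ⊙ (C ⊙ A)) ◁ n) ≫ (((A ⊙ V) ◁ r3) ▷ C))
        ⊗≫ (A ◁ (V ◁ (A ◁ n)))
        ⊗≫ (A ◁ (r1 ▷ C)) ⊗≫ (m ▷ (V ⊙ C)) := by
      monoidal
    _ = 𝟙 (((V ⊙ C) ⊙ (V ⊙ C)) ⊙ A) ⊗≫ (V ◁ (r2 ▷ (C ⊙ A))) ⊗≫ (V ◁ (V ◁ (C ◁ r3)))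
        ⊗≫ (V ◁ (V ◁ (r3 ▷ C))) ⊗≫ (ee ▷ (A ⊙ (C ⊙ C)))
        ⊗≫ ((((A ⊙ V) ◁ r3) ▷ (C ⊙ C)) ≫ (((A ⊙ V) ⊙ (A ⊙ C)) ◁ n))
        ⊗≫ (A ◁ (V ◁ (A ◁ n)))
        ⊗≫ (A ◁ (r1 ▷ C)) ⊗≫ (m ▷ (V ⊙ C)) := by
      rw [whisker_exchange ((A ⊙ V) ◁ r3) n]
    _ = 𝟙 (((V ⊙ C) ⊙ (V ⊙ C)) ⊙ A) ⊗≫ (V ◁ (r2 ▷ (C ⊙ A))) ⊗≫ (V ◁ (V ◁ (C ◁ r3)))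
        ⊗≫ (V ◁ (V ◁ (r3 ▷ C))) ⊗≫ (ee ▷ (A ⊙ (C ⊙ C)))
        ⊗≫ (((A ⊙ V) ◁ r3) ▷ (C ⊙ C))
        ⊗≫ (((A ⊙ (V ⊙ A)) ◁ ((C ◁ n) ≫ n))
              ≫ (((A ◁ r1) ≫ (α_ A A V).inv ≫ (m ▷ V)) ▷ C))
        ⊗≫ 𝟙 (A ⊙ (V ⊙ C)) := by
      monoidal
    _ = 𝟙 (((V ⊙ C) ⊙ (V ⊙ C)) ⊙ A) ⊗≫ (V ◁ (r2 ▷ (C ⊙ A))) ⊗≫ (V ◁ (V ◁ (C ◁ r3)))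
        ⊗≫ (V ◁ (V ◁ (r3 ▷ C))) ⊗≫ (ee ▷ (A ⊙ (C ⊙ C)))
        ⊗≫ (((A ⊙ V) ◁ r3) ▷ (C ⊙ C))
        ⊗≫ ((((A ◁ r1) ≫ (α_ A A V).inv ≫ (m ▷ V)) ▷ (C ⊙ (C ⊙ C)))
              ≫ ((A ⊙ V) ◁ ((C ◁ n) ≫ n)))
        ⊗≫ 𝟙 (A ⊙ (V ⊙ C)) := by
      rw [whisker_exchange ((A ◁ r1) ≫ (α_ A A V).inv ≫ (m ▷ V)) ((C ◁ n) ≫ n)]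
    _ = 𝟙 (((V ⊙ C) ⊙ (V ⊙ C)) ⊙ A) ⊗≫ (V ◁ (r2 ▷ (C ⊙ A))) ⊗≫ (V ◁ (V ◁ (C ◁ r3)))
        ⊗≫ (V ◁ (V ◁ (r3 ▷ C)))
        ⊗≫ (((ee ▷ A) ≫ (α_ (A ⊙ V) C A).hom ≫ ((A ⊙ V) ◁ r3) ≫ (α_ (A ⊙ V) A C).inv
              ≫ ((α_ A V A).hom ▷ C) ≫ ((A ◁ r1) ▷ C)
              ≫ (((α_ A A V).inv ≫ (m ▷ V)) ▷ C)) ▷ (C ⊙ C))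
        ⊗≫ ((A ⊙ V) ◁ ((C ◁ n) ≫ n)) ⊗≫ 𝟙 (A ⊙ (V ⊙ C)) := by
      monoidal
    _ = 𝟙 (((V ⊙ C) ⊙ (V ⊙ C)) ⊙ A) ⊗≫ (V ◁ (r2 ▷ (C ⊙ A))) ⊗≫ (V ◁ (V ◁ (C ◁ r3)))
        ⊗≫ (V ◁ (V ◁ (r3 ▷ C)))
        ⊗≫ (((α_ V V A).hom ≫ (V ◁ r1) ≫ (α_ V A V).inv ≫ (r1 ▷ V) ≫ (α_ A V V).hom
              ≫ (A ◁ ee) ≫ (α_ A (A ⊙ V) C).inv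
              ≫ (((α_ A A V).inv ≫ (m ▷ V)) ▷ C)) ▷ (C ⊙ C))
        ⊗≫ ((A ⊙ V) ◁ ((C ◁ n) ≫ n)) ⊗≫ 𝟙 (A ⊙ (V ⊙ C)) := by
      rw [← heq4]
    _ = 𝟙 (((V ⊙ C) ⊙ (V ⊙ C)) ⊙ A)
        ⊗≫ (((V ◁ r2) ▷ (C ⊙ A)) ≫ ((V ⊙ (V ⊙ C)) ◁ r3))
        ⊗≫ (V ◁ (V ◁ (r3 ▷ C)))
        ⊗≫ (V ◁ (r1 ▷ (C ⊙ C)))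
        ⊗≫ (r1 ▷ (V ⊙ (C ⊙ C)))
        ⊗≫ (A ◁ (ee ▷ (C ⊙ C)))
        ⊗≫ (m ▷ ((V ⊙ C) ⊙ (C ⊙ C)))
        ⊗≫ ((A ⊙ V) ◁ ((C ◁ n) ≫ n)) ⊗≫ 𝟙 (A ⊙ (V ⊙ C)) := by
      monoidal
    _ = 𝟙 (((V ⊙ C) ⊙ (V ⊙ C)) ⊙ A)
        ⊗≫ (((V ⊙ (C ⊙ V)) ◁ r3) ≫ ((V ◁ r2) ▷ (A ⊙ C)))
        ⊗≫ (V ◁ (V ◁ (r3 ▷ C)))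
        ⊗≫ (V ◁ (r1 ▷ (C ⊙ C)))
        ⊗≫ (r1 ▷ (V ⊙ (C ⊙ C)))
        ⊗≫ (A ◁ (ee ▷ (C ⊙ C)))
        ⊗≫ (m ▷ ((V ⊙ C) ⊙ (C ⊙ C)))
        ⊗≫ ((A ⊙ V) ◁ ((C ◁ n) ≫ n)) ⊗≫ 𝟙 (A ⊙ (V ⊙ C)) := by
      rw [← whisker_exchange (V ◁ r2) r3]
    _ = 𝟙 (((V ⊙ C) ⊙ (V ⊙ C)) ⊙ A)
        ⊗≫ ((V ⊙ (C ⊙ V)) ◁ r3)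
        ⊗≫ (V ◁ (((α_ C V A).inv ≫ (r2 ▷ A) ≫ (α_ V C A).hom ≫ (V ◁ r3)
              ≫ (α_ V A C).inv ≫ (r1 ▷ C) ≫ (α_ A V C).hom) ▷ C))
        ⊗≫ (r1 ▷ (V ⊙ (C ⊙ C)))
        ⊗≫ (A ◁ (ee ▷ (C ⊙ C)))
        ⊗≫ (m ▷ ((V ⊙ C) ⊙ (C ⊙ C)))
        ⊗≫ ((A ⊙ V) ◁ ((C ◁ n) ≫ n)) ⊗≫ 𝟙 (A ⊙ (V ⊙ C)) := by
      monoidal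
    _ = 𝟙 (((V ⊙ C) ⊙ (V ⊙ C)) ⊙ A)
        ⊗≫ ((V ⊙ (C ⊙ V)) ◁ r3)
        ⊗≫ (V ◁ (((C ◁ r1) ≫ (α_ C A V).inv ≫ (r3 ▷ V) ≫ (α_ A C V).hom
              ≫ (A ◁ r2)) ▷ C))
        ⊗≫ (r1 ▷ (V ⊙ (C ⊙ C)))
        ⊗≫ (A ◁ (ee ▷ (C ⊙ C)))
        ⊗≫ (m ▷ ((V ⊙ C) ⊙ (C ⊙ C)))
        ⊗≫ ((A ⊙ V) ◁ ((C ◁ n) ≫ n)) ⊗≫ 𝟙 (A ⊙ (V ⊙ C)) := by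
      rw [← heq3]
    _ = 𝟙 (((V ⊙ C) ⊙ (V ⊙ C)) ⊙ A)
        ⊗≫ ((V ⊙ (C ⊙ V)) ◁ r3)
        ⊗≫ (V ◁ (C ◁ (r1 ▷ C)))
        ⊗≫ (V ◁ (r3 ▷ (V ⊙ C)))
        ⊗≫ ((((V ⊙ A) ◁ (r2 ▷ C)) ≫ (r1 ▷ ((V ⊙ C) ⊙ C)))
        ⊗≫ (A ◁ (ee ▷ (C ⊙ C)))
        ⊗≫ (m ▷ ((V ⊙ C) ⊙ (C ⊙ C)))
        ⊗≫ ((A ⊙ V) ◁ ((C ◁ n) ≫ n))) ⊗≫ 𝟙 (A ⊙ (V ⊙ C)) := by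
      monoidal
    _ = 𝟙 (((V ⊙ C) ⊙ (V ⊙ C)) ⊙ A)
        ⊗≫ ((V ⊙ (C ⊙ V)) ◁ r3)
        ⊗≫ (V ◁ (C ◁ (r1 ▷ C)))
        ⊗≫ (V ◁ (r3 ▷ (V ⊙ C)))
        ⊗≫ (((r1 ▷ ((C ⊙ V) ⊙ C)) ≫ ((A ⊙ V) ◁ (r2 ▷ C)))
        ⊗≫ (A ◁ (ee ▷ (C ⊙ C)))
        ⊗≫ (m ▷ ((V ⊙ C) ⊙ (C ⊙ C)))
        ⊗≫ ((A ⊙ V) ◁ ((C ◁ n) ≫ n))) ⊗≫ 𝟙 (A ⊙ (V ⊙ C)) := by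
      rw [whisker_exchange r1 (r2 ▷ C)]
    _ = 𝟙 (((V ⊙ C) ⊙ (V ⊙ C)) ⊙ A)
        ⊗≫ ((V ⊙ (C ⊙ V)) ◁ r3)
        ⊗≫ (V ◁ (C ◁ (r1 ▷ C)))
        ⊗≫ (V ◁ (r3 ▷ (V ⊙ C)))
        ⊗≫ (r1 ▷ ((C ⊙ V) ⊙ C))
        ⊗≫ ((A ⊙ V) ◁ (r2 ▷ C))
        ⊗≫ ((((A ◁ ee) ≫ (α_ A (A ⊙ V) C).inv ≫ (((α_ A A V).inv ≫ (m ▷ V)) ▷ C)) ▷ (C ⊙ C))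
              ≫ (((A ⊙ V) ⊙ C) ◁ n))
        ⊗≫ ((A ⊙ V) ◁ n) ⊗≫ 𝟙 (A ⊙ (V ⊙ C)) := by
      monoidal
    _ = 𝟙 (((V ⊙ C) ⊙ (V ⊙ C)) ⊙ A)
        ⊗≫ ((V ⊙ (C ⊙ V)) ◁ r3)
        ⊗≫ (V ◁ (C ◁ (r1 ▷ C)))
        ⊗≫ (V ◁ (r3 ▷ (V ⊙ C)))
        ⊗≫ (r1 ▷ ((C ⊙ V) ⊙ C))
        ⊗≫ ((A ⊙ V) ◁ (r2 ▷ C))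
        ⊗≫ (((A ⊙ (V ⊙ V)) ◁ n)
              ≫ (((A ◁ ee) ≫ (α_ A (A ⊙ V) C).inv ≫ (((α_ A A V).inv ≫ (m ▷ V)) ▷ C)) ▷ C))
        ⊗≫ ((A ⊙ V) ◁ n) ⊗≫ 𝟙 (A ⊙ (V ⊙ C)) := by
      rw [← whisker_exchange ((A ◁ ee) ≫ (α_ A (A ⊙ V) C).inv
            ≫ (((α_ A A V).inv ≫ (m ▷ V)) ▷ C)) n]
    _ = 𝟙 (((V ⊙ C) ⊙ (V ⊙ C)) ⊙ A)
        ⊗≫ ((V ⊙ (C ⊙ V)) ◁ r3)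
        ⊗≫ (V ◁ (C ◁ (r1 ▷ C)))
        ⊗≫ (V ◁ (r3 ▷ (V ⊙ C)))
        ⊗≫ (r1 ▷ ((C ⊙ V) ⊙ C))
        ⊗≫ ((A ⊙ V) ◁ (r2 ▷ C))
        ⊗≫ ((A ⊙ (V ⊙ V)) ◁ n)
        ⊗≫ (A ◁ (ee ▷ C))
        ⊗≫ ((m ▷ (V ⊙ (C ⊙ C))) ≫ (A ◁ (V ◁ n)))
        ⊗≫ 𝟙 (A ⊙ (V ⊙ C)) := by
      monoidal
    _ = 𝟙 (((V ⊙ C) ⊙ (V ⊙ C)) ⊙ A)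
        ⊗≫ ((V ⊙ (C ⊙ V)) ◁ r3)
        ⊗≫ (V ◁ (C ◁ (r1 ▷ C)))
        ⊗≫ (V ◁ (r3 ▷ (V ⊙ C)))
        ⊗≫ (r1 ▷ ((C ⊙ V) ⊙ C))
        ⊗≫ ((A ⊙ V) ◁ (r2 ▷ C))
        ⊗≫ ((A ⊙ (V ⊙ V)) ◁ n)
        ⊗≫ (A ◁ (ee ▷ C))
        ⊗≫ (((A ⊙ A) ◁ (V ◁ n)) ≫ (m ▷ (V ⊙ C)))
        ⊗≫ 𝟙 (A ⊙ (V ⊙ C)) := by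
      rw [← whisker_exchange m (V ◁ n)]
    _ = _ := by
      monoidal

end KeyLemma

section MCatSec
open CategoryTheory MonoidalCategory
universe w u

/-- Bundled `kk`-modules in universe `max w u`. -/
structure MCat (kk : Type u) [Field kk] where
  carrier : Type (max w u)
  [isAddCommMonoid : AddCommMonoid carrier]
  [isModule : Module kk carrier]

attribute [instance] MCat.isAddCommMonoid MCat.isModule

variable {kk : Type u} [Field kk]

instance : CoeSort (MCat.{w} kk) (Type (max w u)) := ⟨MCat.carrier⟩

/-- Bundle a module. -/
def MCat.of (kk : Type u) [Field kk] (X : Type (max w u)) [AddCommMonoid X] [Module kk X] :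
    MCat.{w} kk := ⟨X⟩

instance : Category (MCat.{w} kk) where
  Hom M N := M →ₗ[kk] N
  id _ := LinearMap.id
  comp f g := g.comp f
  id_comp _ := rfl
  comp_id _ := rfl
  assoc _ _ _ := rfl

/-- Iso from a linear equivalence. -/
def MCat.mkIso {M N : MCat.{w} kk} (e : M ≃ₗ[kk] N) : M ≅ N where
  hom := e.toLinearMap
  inv := e.symm.toLinearMap
  hom_inv_id := LinearMap.ext fun x => e.symm_apply_apply x
  inv_hom_id := LinearMap.ext fun x => e.apply_symm_apply x

/-- The left unitor equivalence. -/
def MCat.lun (M : Type (max w u)) [AddCommMonoid M] [Module kk M] :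
    ULift.{max w u} kk ⊗[kk] M ≃ₗ[kk] M :=
  (TensorProduct.congr (ULift.moduleEquiv : ULift.{max w u} kk ≃ₗ[kk] kk)
    (LinearEquiv.refl kk M)).trans (TensorProduct.lid kk M)

/-- The right unitor equivalence. -/
def MCat.run (M : Type (max w u)) [AddCommMonoid M] [Module kk M] :
    M ⊗[kk] ULift.{max w u} kk ≃ₗ[kk] M :=
  (TensorProduct.congr (LinearEquiv.refl kk M)
    (ULift.moduleEquiv : ULift.{max w u} kk ≃ₗ[kk] kk)).trans (TensorProduct.rid kk M)

private theorem MCat.lun_natural {M N : Type (max w u)} [AddCommMonoid M] [Module kk M]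
    [AddCommMonoid N] [Module kk N] (f : M →ₗ[kk] N) :
    (MCat.lun N).toLinearMap ∘ₗ TensorProduct.map LinearMap.id f
      = f ∘ₗ (MCat.lun M).toLinearMap := by
  apply TensorProduct.ext'
  intro x y
  simp [MCat.lun]

private theorem MCat.run_natural {M N : Type (max w u)} [AddCommMonoid M] [Module kk M]
    [AddCommMonoid N] [Module kk N] (f : M →ₗ[kk] N) :
    (MCat.run N).toLinearMap ∘ₗ TensorProduct.map f LinearMap.id
      = f ∘ₗ (MCat.run M).toLinearMap := by
  apply TensorProduct.ext'
  intro x y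
  simp [MCat.run]

private theorem MCat.tri (M N : Type (max w u)) [AddCommMonoid M] [Module kk M]
    [AddCommMonoid N] [Module kk N] :
    TensorProduct.map LinearMap.id (MCat.lun N).toLinearMap
        ∘ₗ (TensorProduct.assoc kk M (ULift.{max w u} kk) N).toLinearMap
      = TensorProduct.map (MCat.run M).toLinearMap LinearMap.id := by
  apply TensorProduct.ext_threefold
  intro x u y
  simp [MCat.lun, MCat.run, TensorProduct.smul_tmul]

instance : MonoidalCategoryStruct (MCat.{w} kk) where
  tensorObj M N := MCat.of kk (M ⊗[kk] N)
  whiskerLeft M _ _ f := LinearMap.lTensor M f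
  whiskerRight f N := LinearMap.rTensor N f
  tensorHom f g := TensorProduct.map f g
  tensorUnit := MCat.of kk (ULift.{max w u} kk)
  associator M N K := MCat.mkIso (TensorProduct.assoc kk M N K)
  leftUnitor M := MCat.mkIso (MCat.lun M)
  rightUnitor M := MCat.mkIso (MCat.run M)

instance : MonoidalCategory (MCat.{w} kk) := .ofTensorHom
  (id_tensorHom_id := fun _ _ => TensorProduct.map_id)
  (id_tensorHom := fun M {Y₁ Y₂} f => rfl)
  (tensorHom_id := fun {X₁ X₂} f N => rfl)
  (tensorHom_comp_tensorHom := fun f₁ f₂ g₁ g₂ => TensorProduct.ext' fun x y => rfl)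
  (associator_naturality := fun f₁ f₂ f₃ => TensorProduct.ext_threefold fun x y z => rfl)
  (leftUnitor_naturality := fun f => MCat.lun_natural f)
  (rightUnitor_naturality := fun f => MCat.run_natural f)
  (pentagon := fun W X Y Z => TensorProduct.ext_fourfold fun w x y z => rfl)
  (triangle := fun X Y => MCat.tri X Y)

end MCatSec

section ITWInfra

variable {kk : Type*} [Field kk]

/-- `F' ∘ eX = eY ∘ F`: the hatted map `F'` intertwines with `F` along equivs. -/
def ITW {X Y X' Y' : Type*} [AddCommMonoid X] [Module kk X] [AddCommMonoid Y] [Module kk Y]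
    [AddCommMonoid X'] [Module kk X'] [AddCommMonoid Y'] [Module kk Y']
    (eX : X ≃ₗ[kk] X') (eY : Y ≃ₗ[kk] Y') (F : X →ₗ[kk] Y) (F' : X' →ₗ[kk] Y') : Prop :=
  F' ∘ₗ (eX : X →ₗ[kk] X') = (eY : Y →ₗ[kk] Y') ∘ₗ F

section lemmas
variable {X Y Z X' Y' Z' : Type*}
  [AddCommMonoid X] [Module kk X] [AddCommMonoid Y] [Module kk Y] [AddCommMonoid Z] [Module kk Z]
  [AddCommMonoid X'] [Module kk X'] [AddCommMonoid Y'] [Module kk Y'] [AddCommMonoid Z'] [Module kk Z']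

theorem ITW.apply {eX : X ≃ₗ[kk] X'} {eY : Y ≃ₗ[kk] Y'} {F : X →ₗ[kk] Y} {F' : X' →ₗ[kk] Y'}
    (h : ITW eX eY F F') (x : X) : F' (eX x) = eY (F x) :=
  LinearMap.congr_fun h x

theorem ITW.of_apply {eX : X ≃ₗ[kk] X'} {eY : Y ≃ₗ[kk] Y'} {F : X →ₗ[kk] Y} {F' : X' →ₗ[kk] Y'}
    (h : ∀ x, F' (eX x) = eY (F x)) : ITW eX eY F F' := LinearMap.ext h

theorem ITW.comp {eX : X ≃ₗ[kk] X'} {eY : Y ≃ₗ[kk] Y'} {eZ : Z ≃ₗ[kk] Z'}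
    {F : X →ₗ[kk] Y} {F' : X' →ₗ[kk] Y'} {G : Y →ₗ[kk] Z} {G' : Y' →ₗ[kk] Z'}
    (h1 : ITW eX eY F F') (h2 : ITW eY eZ G G') : ITW eX eZ (G ∘ₗ F) (G' ∘ₗ F') :=
  ITW.of_apply fun x => by rw [LinearMap.comp_apply, h1.apply, h2.apply]; rfl

theorem ITW.conj (eX : X ≃ₗ[kk] X') (eY : Y ≃ₗ[kk] Y') (F : X →ₗ[kk] Y) :
    ITW eX eY F ((eY : Y →ₗ[kk] Y') ∘ₗ F ∘ₗ (eX.symm : X' →ₗ[kk] X)) :=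
  ITW.of_apply fun x => by simp

theorem ITW.eq {eX : X ≃ₗ[kk] X'} {eY : Y ≃ₗ[kk] Y'}
    {F G : X →ₗ[kk] Y} {F' G' : X' →ₗ[kk] Y'}
    (h1 : ITW eX eY F F') (h2 : ITW eX eY G G') (h : F = G) : F' = G' := by
  have : F' ∘ₗ (eX : X →ₗ[kk] X') = G' ∘ₗ (eX : X →ₗ[kk] X') := by
    rw [h1, h2, h]
  ext x
  simpa using LinearMap.congr_fun this (eX.symm x)

theorem ITW.down {eX : X ≃ₗ[kk] X'} {eY : Y ≃ₗ[kk] Y'}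
    {F G : X →ₗ[kk] Y} {F' G' : X' →ₗ[kk] Y'}
    (h1 : ITW eX eY F F') (h2 : ITW eX eY G G') (h : F' = G') : F = G := by
  ext x
  have := LinearMap.congr_fun (h.symm ▸ h1 : ITW eX eY F G') x
  have h2x := LinearMap.congr_fun h2 x
  exact eY.injective (by
    simpa using (this.symm.trans h2x))

variable {W W' : Type*} [AddCommMonoid W] [Module kk W] [AddCommMonoid W'] [Module kk W']

theorem ITW.lTensor (e : X ≃ₗ[kk] X') {f1 : Y ≃ₗ[kk] Y'} {f2 : Z ≃ₗ[kk] Z'}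
    {G : Y →ₗ[kk] Z} {G' : Y' →ₗ[kk] Z'} (h : ITW f1 f2 G G') :
    ITW (TensorProduct.congr e f1) (TensorProduct.congr e f2)
      (LinearMap.lTensor X G) (LinearMap.lTensor X' G') :=
  ITW.of_apply <| by
    intro t
    have : (LinearMap.lTensor X' G' ∘ₗ (TensorProduct.congr e f1 : X ⊗[kk] Y →ₗ[kk] X' ⊗[kk] Y')) t
        = ((TensorProduct.congr e f2 : X ⊗[kk] Z →ₗ[kk] X' ⊗[kk] Z') ∘ₗ LinearMap.lTensor X G) t := by
      refine LinearMap.congr_fun (TensorProduct.ext' fun x y => ?_) t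
      simp [h.apply y]
    exact this

theorem ITW.rTensor (e : X ≃ₗ[kk] X') {f1 : Y ≃ₗ[kk] Y'} {f2 : Z ≃ₗ[kk] Z'}
    {G : Y →ₗ[kk] Z} {G' : Y' →ₗ[kk] Z'} (h : ITW f1 f2 G G') :
    ITW (TensorProduct.congr f1 e) (TensorProduct.congr f2 e)
      (LinearMap.rTensor X G) (LinearMap.rTensor X' G') :=
  ITW.of_apply <| by
    intro t
    have : (LinearMap.rTensor X' G' ∘ₗ (TensorProduct.congr f1 e : Y ⊗[kk] X →ₗ[kk] Y' ⊗[kk] X')) t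
        = ((TensorProduct.congr f2 e : Z ⊗[kk] X →ₗ[kk] Z' ⊗[kk] X') ∘ₗ LinearMap.rTensor X G) t := by
      refine LinearMap.congr_fun (TensorProduct.ext' fun y x => ?_) t
      simp [h.apply y]
    exact this

theorem ITW.assoc (e1 : X ≃ₗ[kk] X') (e2 : Y ≃ₗ[kk] Y') (e3 : Z ≃ₗ[kk] Z') :
    ITW (TensorProduct.congr (TensorProduct.congr e1 e2) e3)
      (TensorProduct.congr e1 (TensorProduct.congr e2 e3))
      (TensorProduct.assoc kk X Y Z).toLinearMap
      (TensorProduct.assoc kk X' Y' Z').toLinearMap := by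
  apply TensorProduct.ext_threefold
  intro x y z
  rfl

theorem ITW.assoc' (e1 : X ≃ₗ[kk] X') (e2 : Y ≃ₗ[kk] Y') (e3 : Z ≃ₗ[kk] Z') :
    ITW (TensorProduct.congr e1 (TensorProduct.congr e2 e3))
      (TensorProduct.congr (TensorProduct.congr e1 e2) e3)
      (TensorProduct.assoc kk X Y Z).symm.toLinearMap
      (TensorProduct.assoc kk X' Y' Z').symm.toLinearMap := by
  apply TensorProduct.ext'
  intro x yz
  induction yz using TensorProduct.induction_on with
  | zero => simp
  | tmul y z => rfl
  | add a b ha hb => simp_all [tmul_add]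

end lemmas

end ITWInfra

universe uk ua uv uc

private theorem aux (kk : Type uk) [Field kk] (A : Type ua) (V : Type uv) (C : Type uc)
    [Ring A] [Algebra kk A] [AddCommGroup V] [Module kk V] [Ring C] [Algebra kk C]
    (e : V) (he : e ≠ 0)
    (R1 : V ⊗[kk] A →ₗ[kk] A ⊗[kk] V) (R2 : C ⊗[kk] V →ₗ[kk] V ⊗[kk] C)
    (R3 : C ⊗[kk] A →ₗ[kk] A ⊗[kk] C) (E : V ⊗[kk] V →ₗ[kk] (A ⊗[kk] V) ⊗[kk] C)
    (h : IsTwoSidedData kk A V C e R1 R2 R3 E) :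
    rTensor (V ⊗[kk] C) (mul' kk A) ∘ₗ α' kk A A (V ⊗[kk] C)
        ∘ₗ lTensor A (tsSigma kk A V C R2 E) ∘ₗ α kk A (V ⊗[kk] C) (V ⊗[kk] C)
        ∘ₗ rTensor (V ⊗[kk] C) (tsR kk A V C R1 R3) ∘ₗ α' kk (V ⊗[kk] C) A (V ⊗[kk] C)
        ∘ₗ lTensor (V ⊗[kk] C) (tsR kk A V C R1 R3)
        ∘ₗ α kk (V ⊗[kk] C) (V ⊗[kk] C) A
      = rTensor (V ⊗[kk] C) (mul' kk A) ∘ₗ α' kk A A (V ⊗[kk] C)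
        ∘ₗ lTensor A (tsR kk A V C R1 R3) ∘ₗ α kk A (V ⊗[kk] C) A
        ∘ₗ rTensor A (tsSigma kk A V C R2 E) := by
  let eA : A ≃ₗ[kk] ULift.{max uk uv uc} A := ULift.moduleEquiv.symm
  let eV : V ≃ₗ[kk] ULift.{max uk ua uc} V := ULift.moduleEquiv.symm
  let eC : C ≃ₗ[kk] ULift.{max uk ua uv} C := ULift.moduleEquiv.symm
  let mh : ULift.{max uk uv uc} A ⊗[kk] ULift.{max uk uv uc} A →ₗ[kk] ULift.{max uk uv uc} A :=
    eA.toLinearMap ∘ₗ mul' kk A ∘ₗ (TensorProduct.congr eA eA).symm.toLinearMap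
  let nh : ULift.{max uk ua uv} C ⊗[kk] ULift.{max uk ua uv} C →ₗ[kk] ULift.{max uk ua uv} C :=
    eC.toLinearMap ∘ₗ mul' kk C ∘ₗ (TensorProduct.congr eC eC).symm.toLinearMap
  let r1h := (TensorProduct.congr eA eV).toLinearMap ∘ₗ R1
    ∘ₗ (TensorProduct.congr eV eA).symm.toLinearMap
  let r2h := (TensorProduct.congr eV eC).toLinearMap ∘ₗ R2
    ∘ₗ (TensorProduct.congr eC eV).symm.toLinearMap
  let r3h := (TensorProduct.congr eA eC).toLinearMap ∘ₗ R3
    ∘ₗ (TensorProduct.congr eC eA).symm.toLinearMap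
  let eeh := (TensorProduct.congr (TensorProduct.congr eA eV) eC).toLinearMap ∘ₗ E
    ∘ₗ (TensorProduct.congr eV eV).symm.toLinearMap
  have itw_mA : ITW (TensorProduct.congr eA eA) eA (mul' kk A) mh := ITW.conj _ _ _
  have itw_nC : ITW (TensorProduct.congr eC eC) eC (mul' kk C) nh := ITW.conj _ _ _
  have itw1 : ITW (TensorProduct.congr eV eA) (TensorProduct.congr eA eV) R1 r1h :=
    ITW.conj _ _ _
  have itw2 : ITW (TensorProduct.congr eC eV) (TensorProduct.congr eV eC) R2 r2h :=
    ITW.conj _ _ _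
  have itw3 : ITW (TensorProduct.congr eC eA) (TensorProduct.congr eA eC) R3 r3h :=
    ITW.conj _ _ _
  have itwE : ITW (TensorProduct.congr eV eV)
      (TensorProduct.congr (TensorProduct.congr eA eV) eC) E eeh := ITW.conj _ _ _
  have itw_mulAV := (ITW.assoc' eA eA eV).comp (ITW.rTensor eV itw_mA)
  have itw_mulXC := (ITW.assoc (TensorProduct.congr eA eV) eC eC).comp
    (ITW.lTensor (TensorProduct.congr eA eV) itw_nC)
  have itw_tsR := ((((ITW.assoc eV eC eA).comp (ITW.lTensor eV itw3)).comp
    (ITW.assoc' eV eA eC)).comp (ITW.rTensor eC itw1)).comp (ITW.assoc eA eV eC)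
  have itw_sigma := ((((((((ITW.assoc eV eC (TensorProduct.congr eV eC)).comp
      (ITW.lTensor eV (ITW.assoc' eC eV eC))).comp
      (ITW.lTensor eV (ITW.rTensor eC itw2))).comp
      (ITW.lTensor eV (ITW.assoc eV eC eC))).comp
      (ITW.lTensor eV (ITW.lTensor eV itw_nC))).comp
      (ITW.assoc' eV eV eC)).comp
      (ITW.rTensor eC itwE)).comp
      itw_mulXC).comp
      (ITW.assoc eA eV eC)
  have hr3h := ITW.eq ((ITW.rTensor eA itw_nC).comp itw3)
    ((((((ITW.assoc eC eC eA).comp (ITW.lTensor eC itw3)).comp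
      (ITW.assoc' eC eA eC)).comp (ITW.rTensor eC itw3)).comp
      (ITW.assoc eA eC eC)).comp (ITW.lTensor eA itw_nC))
    h.twist.mul_right
  have heq3h := ITW.eq
    (((((ITW.lTensor eC itw1).comp (ITW.assoc' eC eA eV)).comp
      (ITW.rTensor eV itw3)).comp (ITW.assoc eA eC eV)).comp (ITW.lTensor eA itw2))
    (((((((ITW.assoc' eC eV eA).comp (ITW.rTensor eA itw2)).comp
      (ITW.assoc eV eC eA)).comp (ITW.lTensor eV itw3)).comp
      (ITW.assoc' eV eA eC)).comp (ITW.rTensor eC itw1)).comp (ITW.assoc eA eV eC))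
    h.eq3
  have heq4h := ITW.eq
    ((((((((ITW.assoc eV eV eA).comp (ITW.lTensor eV itw1)).comp
      (ITW.assoc' eV eA eV)).comp (ITW.rTensor eV itw1)).comp
      (ITW.assoc eA eV eV)).comp (ITW.lTensor eA itwE)).comp
      (ITW.assoc' eA (TensorProduct.congr eA eV) eC)).comp
      (ITW.rTensor eC itw_mulAV))
    (((((((ITW.rTensor eA itwE).comp
      (ITW.assoc (TensorProduct.congr eA eV) eC eA)).comp
      (ITW.lTensor (TensorProduct.congr eA eV) itw3)).comp
      (ITW.assoc' (TensorProduct.congr eA eV) eA eC)).comp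
      (ITW.rTensor eC (ITW.assoc eA eV eA))).comp
      (ITW.rTensor eC (ITW.lTensor eA itw1))).comp
      (ITW.rTensor eC itw_mulAV))
    h.eq4
  have keyconc := key (M := MCat.{max ua uv uc} kk)
    (MCat.of kk (ULift.{max uk uv uc} A)) (MCat.of kk (ULift.{max uk ua uc} V))
    (MCat.of kk (ULift.{max uk ua uv} C)) mh nh r1h r2h r3h eeh hr3h heq3h heq4h
    _ rfl _ rfl
  exact ITW.down
    ((((((((ITW.assoc (TensorProduct.congr eV eC) (TensorProduct.congr eV eC) eA).comp
      (ITW.lTensor (TensorProduct.congr eV eC) itw_tsR)).comp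
      (ITW.assoc' (TensorProduct.congr eV eC) eA (TensorProduct.congr eV eC))).comp
      (ITW.rTensor (TensorProduct.congr eV eC) itw_tsR)).comp
      (ITW.assoc eA (TensorProduct.congr eV eC) (TensorProduct.congr eV eC))).comp
      (ITW.lTensor eA itw_sigma)).comp
      (ITW.assoc' eA eA (TensorProduct.congr eV eC))).comp
      (ITW.rTensor (TensorProduct.congr eV eC) itw_mA))
    (((((ITW.rTensor eA itw_sigma).comp
      (ITW.assoc eA (TensorProduct.congr eV eC) eA)).comp
      (ITW.lTensor eA itw_tsR)).comp
      (ITW.assoc' eA eA (TensorProduct.congr eV eC))).comp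
      (ITW.rTensor (TensorProduct.congr eV eC) itw_mA))
    keyconc.symm

/-- for two-sided crossed product data, the maps
`R = (R1 ⊗ id_C)∘(id_V ⊗ R3)` and `σ` satisfy the compatibility condition (brz5). -/
theorem tsSigma_satisfies_brz5
    (A V C : Type*) [Ring A] [Algebra k A] [AddCommGroup V] [Module k V]
    [Ring C] [Algebra k C] (e : V) (he : e ≠ 0)
    (R1 : V ⊗[k] A →ₗ[k] A ⊗[k] V) (R2 : C ⊗[k] V →ₗ[k] V ⊗[k] C)
    (R3 : C ⊗[k] A →ₗ[k] A ⊗[k] C) (E : V ⊗[k] V →ₗ[k] (A ⊗[k] V) ⊗[k] C)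
    (h : IsTwoSidedData k A V C e R1 R2 R3 E) :
    rTensor (V ⊗[k] C) (mul' k A) ∘ₗ α' k A A (V ⊗[k] C)
        ∘ₗ lTensor A (tsSigma k A V C R2 E) ∘ₗ α k A (V ⊗[k] C) (V ⊗[k] C)
        ∘ₗ rTensor (V ⊗[k] C) (tsR k A V C R1 R3) ∘ₗ α' k (V ⊗[k] C) A (V ⊗[k] C)
        ∘ₗ lTensor (V ⊗[k] C) (tsR k A V C R1 R3)
        ∘ₗ α k (V ⊗[k] C) (V ⊗[k] C) A
      = rTensor (V ⊗[k] C) (mul' k A) ∘ₗ α' k A A (V ⊗[k] C)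
        ∘ₗ lTensor A (tsR k A V C R1 R3) ∘ₗ α k A (V ⊗[k] C) A
        ∘ₗ rTensor A (tsSigma k A V C R2 E) := by
  exact aux k A V C e he R1 R2 R3 E h

end TwoSidedCP
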